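/- arXiv:2012.01753 — 3 statements merged into one kernel-verified Lean document; each statement's English description precedes it below -/
import Mathlib

section
/- Let c > 0 and k > 0 with c·k < 1, and set k̃ = k/√(1 − c²k²). Then k̃ satisfies the nonlocal dispersion relation ∫_ℝ (1 − e^{i k̃ s}) · (1/(2c³)) e^{-|s|/c} ds = k². -/
open MeasureTheory

open Set Filter Topology


lemma aux_intOn (a : ℂ) (ha : a.re < 0) :
    IntegrableOn (fun x : ℝ => Complex.exp (a * x)) (Ioi 0) := by
  refine (exp_neg_integrableOn_Ioi 0 (neg_pos.mpr ha)).mono'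
    ((Complex.continuous_exp.comp
      (continuous_const.mul Complex.continuous_ofReal)).aestronglyMeasurable) ?_
  filter_upwards with x
  simp [Complex.norm_exp, Complex.mul_re]

lemma aux_int (a : ℂ) (ha : a.re < 0) :
    ∫ x in Ioi (0:ℝ), Complex.exp (a * x) = -a⁻¹ := by
  have ha0 : a ≠ 0 := fun h => by simp [h] at ha
  have hderiv : ∀ x ∈ Ici (0:ℝ), HasDerivAt (fun x : ℝ => Complex.exp (a * x) * a⁻¹)
      (Complex.exp (a * x)) x := by
    intro x _
    have h1 : HasDerivAt (fun x : ℝ => a * (x:ℂ)) a x := by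
      simpa using (Complex.ofRealCLM.hasDerivAt (x := x)).const_mul a
    have h2 := (h1.cexp).mul_const a⁻¹
    simpa [mul_assoc, mul_inv_cancel₀ ha0] using h2
  have htend : Tendsto (fun x : ℝ => Complex.exp (a * x) * a⁻¹) atTop (𝓝 0) := by
    rw [tendsto_zero_iff_norm_tendsto_zero]
    have : (fun x : ℝ => ‖Complex.exp (a * x) * a⁻¹‖) =
        fun x : ℝ => Real.exp (a.re * x) * ‖a⁻¹‖ := by
      funext x; simp [Complex.norm_exp, Complex.mul_re]
    rw [this]
    simpa using (Real.tendsto_exp_atBot.comp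
      (tendsto_id.const_mul_atTop_of_neg ha)).mul_const ‖a⁻¹‖
  have := integral_Ioi_of_hasDerivAt_of_tendsto' hderiv (aux_intOn a ha) htend
  simpa using this

lemma aux_intOn_neg {f : ℝ → ℂ} (hf : IntegrableOn f (Ioi 0)) :
    IntegrableOn (fun x : ℝ => f (-x)) (Iic 0) := by
  have h0 : IntegrableOn f (Ici 0) := by rwa [integrableOn_Ici_iff_integrableOn_Ioi]
  have h2 : Integrable (Set.indicator (Ici 0) f) :=
    (integrable_indicator_iff measurableSet_Ici).2 h0
  have h3 := h2.comp_neg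
  have h4 : (fun x : ℝ => Set.indicator (Ici 0) f (-x)) =
      Set.indicator (Iic 0) (fun x => f (-x)) := by
    funext x
    by_cases hx : x ≤ 0 <;>
      simp [Set.indicator, Set.mem_Ici, Set.mem_Iic, neg_nonneg, hx]
  rw [h4] at h3
  exact (integrable_indicator_iff measurableSet_Iic).1 h3

/-- For the 1D exponential kernel `γ_r(s) = (1/(2c³)) e^{-|s|/c}` with `c > 0`, `k > 0` and
`c·k < 1`, the modified wavenumber `k̃ = k/√(1 − c²k²)` satisfies the nonlocal dispersion
relation `∫_ℝ (1 − e^{i k̃ s}) γ_r(s) ds = k²`. -/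
theorem dispersion_relation_exponential_kernel (c k : ℝ) (hc : 0 < c) (hk : 0 < k)
    (hck : c * k < 1) (ktilde : ℝ) (hkt : ktilde = k / Real.sqrt (1 - c ^ 2 * k ^ 2)) :
    ∫ s : ℝ, (1 - Complex.exp (Complex.I * ktilde * s)) *
        (((1 / (2 * c ^ 3)) * Real.exp (-|s| / c) : ℝ) : ℂ) = (k : ℂ) ^ 2 := by
  have hc0 : c ≠ 0 := ne_of_gt hc
  have h1 : 0 < 1 - c ^ 2 * k ^ 2 := by nlinarith [mul_pos hc hk, mul_pos (mul_pos hc hk) (mul_pos hc hk)]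
  have hkt2 : ktilde ^ 2 * (1 - c ^ 2 * k ^ 2) = k ^ 2 := by
    rw [hkt, div_pow, Real.sq_sqrt h1.le]
    exact div_mul_cancel₀ _ h1.ne'
  set a0 : ℂ := -(1/c : ℝ) with ha0def
  set a1 : ℂ := Complex.I * (ktilde : ℂ) - (1/c : ℝ) with ha1def
  set a2 : ℂ := -(Complex.I * (ktilde : ℂ)) - (1/c : ℝ) with ha2def
  have ha0 : a0.re < 0 := by simp [ha0def]; positivity
  have ha1 : a1.re < 0 := by
    simp [ha1def, Complex.sub_re, Complex.mul_re]
    positivity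
  have ha2 : a2.re < 0 := by
    simp [ha2def, Complex.sub_re, Complex.mul_re]
    positivity
  set F : ℝ → ℂ := fun s => (1 - Complex.exp (Complex.I * ktilde * s)) *
        (((1 / (2 * c ^ 3)) * Real.exp (-|s| / c) : ℝ) : ℂ) with hFdef
  set G : ℝ → ℂ := fun s => (1 - Complex.exp (-(Complex.I * ktilde) * s)) *
        (((1 / (2 * c ^ 3)) * Real.exp (-|s| / c) : ℝ) : ℂ) with hGdef
  -- pointwise forms on Ioi 0
  have hF_eq : EqOn (fun s : ℝ => (1/(2*c^3) : ℂ) *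
      (Complex.exp (a0 * s) - Complex.exp (a1 * s))) F (Ioi 0) := by
    intro s hs
    have habs : |s| = s := abs_of_pos hs
    have he : ((Real.exp (-|s|/c) : ℝ) : ℂ) = Complex.exp (a0 * s) := by
      rw [Complex.ofReal_exp, habs]
      congr 1
      push_cast [ha0def]
      ring
    have he1 : Complex.exp (a1 * s) =
        Complex.exp (Complex.I * ktilde * s) * Complex.exp (a0 * s) := by
      rw [← Complex.exp_add]
      congr 1
      rw [ha1def, ha0def]
      push_cast
      ring
    simp only [hFdef, he1, Complex.ofReal_mul, he]
    push_cast
    ring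
  have hG_eq : EqOn (fun s : ℝ => (1/(2*c^3) : ℂ) *
      (Complex.exp (a0 * s) - Complex.exp (a2 * s))) G (Ioi 0) := by
    intro s hs
    have habs : |s| = s := abs_of_pos hs
    have he : ((Real.exp (-|s|/c) : ℝ) : ℂ) = Complex.exp (a0 * s) := by
      rw [Complex.ofReal_exp, habs]
      congr 1
      push_cast [ha0def]
      ring
    have he1 : Complex.exp (a2 * s) =
        Complex.exp (-(Complex.I * ktilde) * s) * Complex.exp (a0 * s) := by
      rw [← Complex.exp_add]
      congr 1
      rw [ha2def, ha0def]
      push_cast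
      ring
    simp only [hGdef, he1, Complex.ofReal_mul, he]
    push_cast
    ring
  have hFG : ∀ s : ℝ, G (-s) = F s := by
    intro s
    simp only [hFdef, hGdef, abs_neg]
    push_cast
    ring_nf
  -- integrability
  have hintF : IntegrableOn F (Ioi 0) :=
    IntegrableOn.congr_fun (((aux_intOn a0 ha0).sub (aux_intOn a1 ha1)).const_mul _)
      hF_eq measurableSet_Ioi
  have hintG : IntegrableOn G (Ioi 0) :=
    IntegrableOn.congr_fun (((aux_intOn a0 ha0).sub (aux_intOn a2 ha2)).const_mul _)
      hG_eq measurableSet_Ioi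
  have hintFIic : IntegrableOn F (Iic 0) := by
    have := aux_intOn_neg hintG
    simpa only [hFG] using this
  -- values
  have key : ∀ b : ℂ, b.re < 0 →
      (∫ s in Ioi (0:ℝ), (1/(2*c^3) : ℂ) * (Complex.exp (a0 * s) - Complex.exp (b * s)))
        = (1/(2*c^3) : ℂ) * (-a0⁻¹ + b⁻¹) := by
    intro b hb
    rw [integral_const_mul, integral_sub (aux_intOn a0 ha0) (aux_intOn b hb),
      aux_int a0 ha0, aux_int b hb]
    ring
  have hIoiF : ∫ s in Ioi (0:ℝ), F s = (1/(2*c^3) : ℂ) * (-a0⁻¹ + a1⁻¹) := by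
    rw [← setIntegral_congr_fun measurableSet_Ioi hF_eq]
    exact key a1 ha1
  have hIoiG : ∫ s in Ioi (0:ℝ), G s = (1/(2*c^3) : ℂ) * (-a0⁻¹ + a2⁻¹) := by
    rw [← setIntegral_congr_fun measurableSet_Ioi hG_eq]
    exact key a2 ha2
  have hIicF : ∫ s in Iic (0:ℝ), F s = (1/(2*c^3) : ℂ) * (-a0⁻¹ + a2⁻¹) := by
    have h := integral_comp_neg_Iic (0:ℝ) G
    simp only [neg_zero] at h
    calc ∫ s in Iic (0:ℝ), F s = ∫ s in Iic (0:ℝ), G (-s) := by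
          simp only [hFG]
      _ = ∫ s in Ioi (0:ℝ), G s := h
      _ = _ := hIoiG
  have hsplit : (∫ s : ℝ, F s) = (∫ s in Iic (0:ℝ), F s) + ∫ s in Ioi (0:ℝ), F s :=
    (intervalIntegral.integral_Iic_add_Ioi hintFIic hintF).symm
  rw [show (∫ s : ℝ, (1 - Complex.exp (Complex.I * ktilde * s)) *
        (((1 / (2 * c ^ 3)) * Real.exp (-|s| / c) : ℝ) : ℂ)) = ∫ s : ℝ, F s from rfl,
    hsplit, hIicF, hIoiF]
  -- final algebra
  have hc0C : (c : ℂ) ≠ 0 := Complex.ofReal_ne_zero.mpr hc0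
  have ha1ne : a1 ≠ 0 := fun h => by rw [h] at ha1; simp at ha1
  have ha2ne : a2 ≠ 0 := fun h => by rw [h] at ha2; simp at ha2
  have hC : ((ktilde : ℂ)) ^ 2 * (1 - (c:ℂ) ^ 2 * (k:ℂ) ^ 2) = (k:ℂ) ^ 2 := by
    exact_mod_cast hkt2
  have e0 : -a0⁻¹ = (c : ℂ) := by
    rw [ha0def]; push_cast; rw [inv_neg, neg_neg, one_div, inv_inv]
  have hn : a1 + a2 = -2 * (c:ℂ)⁻¹ := by
    rw [ha1def, ha2def]; push_cast; ring
  have hd : a1 * a2 = (c:ℂ)⁻¹ ^ 2 + (ktilde:ℂ) ^ 2 := by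
    rw [ha1def, ha2def]; push_cast
    linear_combination -(ktilde:ℂ) ^ 2 * Complex.I_sq
  have hsum : a1⁻¹ + a2⁻¹ = (-2 * (c:ℂ)⁻¹) / ((c:ℂ)⁻¹ ^ 2 + (ktilde:ℂ) ^ 2) := by
    rw [inv_add_inv ha1ne ha2ne, hn, hd]
  have hdR : (c⁻¹ ^ 2 + ktilde ^ 2 : ℝ) ≠ 0 := by positivity
  have hdne : ((c:ℂ)⁻¹ ^ 2 + (ktilde:ℂ) ^ 2) ≠ 0 := by
    have h5 : (c:ℂ)⁻¹ ^ 2 + (ktilde:ℂ) ^ 2 = ((c⁻¹ ^ 2 + ktilde ^ 2 : ℝ) : ℂ) := by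
      push_cast; ring
    rw [h5]
    exact_mod_cast hdR
  have hrw : (1/(2*(c:ℂ)^3)) * (-a0⁻¹ + a2⁻¹) + (1/(2*(c:ℂ)^3)) * (-a0⁻¹ + a1⁻¹)
      = (1/(2*(c:ℂ)^3)) * (2 * (c:ℂ) + (a1⁻¹ + a2⁻¹)) := by
    rw [e0]; ring
  rw [hrw, hsum]
  have hd3 : (1 + (c:ℂ)^2 * (ktilde:ℂ)^2) ≠ 0 := by
    have h5 : 1 + (c:ℂ)^2 * (ktilde:ℂ)^2 = ((1 + c^2*ktilde^2 : ℝ) : ℂ) := by push_cast; ring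
    rw [h5]
    exact_mod_cast (by positivity : (1 + c^2*ktilde^2 : ℝ) ≠ 0)
  have e1 : (c:ℂ)⁻¹/((c:ℂ)⁻¹^2+(ktilde:ℂ)^2) = (c:ℂ)/(1+(c:ℂ)^2*(ktilde:ℂ)^2) := by
    rw [div_eq_div_iff hdne hd3]
    field_simp
  rw [mul_div_assoc, e1]
  field_simp
  linear_combination ((c:ℂ)^2) * hC
end

section
/- Let l > 0, k > 0, c > 0 with c·k < 1, and k̃ = k/√(1 − c²k²). Let f ∈ L²(ℝ) with support contained in Ω = [−l, l]. Let σ: ℝ → ℝ be nonnegative with σ = 0 on [−l, l], let η(x) = |∫₀ˣ σ(t) dt|, and let z = z₁ + i z₂ with z₁ ≥ 0, z₂ > 0. Define x̃ = x + (z/k) ∫₀ˣ σ(t) dt, and define the PML-continued solution for |x| > l by u^e(x̃) = (1/(1 − c²k²)²) ∫_{−l}^{l} G_{x̃}(y) f(y) dy, where G_{x̃}(y) = − e^{i k̃ (x̃ − y)}/(2 i k̃) when x > l and G_{x̃}(y) = − e^{−i k̃ (x̃ − y)}/(2 i k̃) when x < −l. Then for all |x| > l, |u^e(x̃)| ≤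 (√l / (√2 · k̃ · (1 − c²k²)²)) · e^{−(k̃/k) z₂ η(x)} · ‖f‖_{L²(Ω)}. -/
open MeasureTheory

private lemma pml_cs (a b : ℝ) (hab : a < b) (g : ℝ → ℝ)
    (h1 : IntegrableOn g (Set.Ioc a b))
    (h2 : IntegrableOn (fun y => g y ^ 2) (Set.Ioc a b)) :
    ∫ y in Set.Ioc a b, g y ≤ Real.sqrt (b - a) * Real.sqrt (∫ y in Set.Ioc a b, g y ^ 2) := by
  set I := ∫ y in Set.Ioc a b, g y ^ 2 with hI
  have hI0 : 0 ≤ I := integral_nonneg fun y => sq_nonneg _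
  have hba : (0:ℝ) < b - a := by linarith
  rcases eq_or_lt_of_le hI0 with h0 | hIpos
  · have hz2 : (fun y => g y ^ 2) =ᵐ[volume.restrict (Set.Ioc a b)] 0 :=
      (integral_eq_zero_iff_of_nonneg (fun y => sq_nonneg _) h2).mp h0.symm
    have hz : ∀ᵐ y ∂(volume.restrict (Set.Ioc a b)), g y = 0 := by
      filter_upwards [hz2] with y hy
      exact pow_eq_zero_iff (n := 2) (by norm_num) |>.mp hy
    rw [integral_congr_ae hz]
    simp only [integral_zero]
    positivity
  · set t := Real.sqrt ((b - a) / I) with ht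
    have htpos : 0 < t := Real.sqrt_pos.mpr (by positivity)
    have hpt : ∀ y, g y ≤ (1/t + t * g y ^ 2) / 2 := by
      intro y
      have key : 2 * t * g y ≤ 1 + t^2 * g y^2 := by nlinarith [sq_nonneg (1 - t * g y)]
      calc g y = (2 * t * g y) / (2 * t) := by field_simp
        _ ≤ (1 + t^2 * g y^2) / (2 * t) := by
            exact (div_le_div_iff_of_pos_right (by positivity)).mpr key
        _ = (1/t + t * g y^2)/2 := by field_simp
    have hconst : IntegrableOn (fun _ : ℝ => (1:ℝ)/t) (Set.Ioc a b) :=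
      integrableOn_const (by simp [Real.volume_Ioc])
    have hint : IntegrableOn (fun y => (1/t + t * g y ^ 2) / 2) (Set.Ioc a b) :=
      (hconst.add (h2.const_mul t)).div_const 2
    have hmono := integral_mono h1 hint hpt
    have hval : ∫ y in Set.Ioc a b, (1/t + t * g y ^ 2) / 2
        = ((1/t) * (b - a) + t * I) / 2 := by
      rw [integral_div, integral_add hconst (h2.const_mul t), integral_const, integral_const_mul]
      simp [Real.volume_Ioc, ENNReal.toReal_ofReal hba.le]
      rw [max_eq_left hba.le, ← hI]
      ring
    rw [hval] at hmono
    refine hmono.trans (le_of_eq ?_)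
    have hs : Real.sqrt (b-a) ^ 2 = b - a := Real.sq_sqrt hba.le
    have hr : Real.sqrt I ^ 2 = I := Real.sq_sqrt hIpos.le
    have hrpos : 0 < Real.sqrt I := Real.sqrt_pos.mpr hIpos
    have hspos : 0 < Real.sqrt (b-a) := Real.sqrt_pos.mpr hba
    have htt : t = Real.sqrt (b-a) / Real.sqrt I := by rw [ht, Real.sqrt_div hba.le]
    rw [htt]
    field_simp
    nlinarith [hs, hr]

private lemma pml_abs_kernel_pos (kt k x y z₁ z₂ S : ℝ) (hkt : 0 < kt) (hk : 0 < k) :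
    ‖-Complex.exp (Complex.I * (kt:ℂ) *
        (((x:ℂ) + (((z₁:ℂ) + (z₂:ℂ) * Complex.I) / (k:ℂ)) * (S:ℂ)) - (y:ℂ)))
      / (2 * Complex.I * (kt:ℂ))‖
    = Real.exp (-(kt * z₂ * S / k)) / (2 * kt) := by
  have hkc : (k:ℂ) ≠ 0 := by exact_mod_cast hk.ne'
  have hX : ((x:ℂ) + (((z₁:ℂ) + (z₂:ℂ) * Complex.I) / (k:ℂ)) * (S:ℂ)) - (y:ℂ)
      = ((x + z₁*S/k - y : ℝ) : ℂ) + ((z₂*S/k : ℝ) : ℂ) * Complex.I := by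
    push_cast; field_simp; ring
  rw [hX, norm_div, norm_neg, Complex.norm_exp]
  have hre : (Complex.I * (kt:ℂ) * (((x + z₁*S/k - y : ℝ) : ℂ)
      + ((z₂*S/k : ℝ) : ℂ) * Complex.I)).re = -(kt * (z₂*S/k)) := by
    simp [Complex.mul_re, Complex.mul_im]
  rw [hre]
  have hden : ‖2 * Complex.I * (kt:ℂ)‖ = 2 * kt := by
    simp [map_mul, Complex.norm_I, Complex.norm_real, abs_of_pos hkt]
  rw [hden]
  ring_nf

private lemma pml_abs_kernel_neg (kt k x y z₁ z₂ S : ℝ) (hkt : 0 < kt) (hk : 0 < k) :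
    ‖-Complex.exp (-Complex.I * (kt:ℂ) *
        (((x:ℂ) + (((z₁:ℂ) + (z₂:ℂ) * Complex.I) / (k:ℂ)) * (S:ℂ)) - (y:ℂ)))
      / (2 * Complex.I * (kt:ℂ))‖
    = Real.exp (kt * z₂ * S / k) / (2 * kt) := by
  have hkc : (k:ℂ) ≠ 0 := by exact_mod_cast hk.ne'
  have hX : ((x:ℂ) + (((z₁:ℂ) + (z₂:ℂ) * Complex.I) / (k:ℂ)) * (S:ℂ)) - (y:ℂ)
      = ((x + z₁*S/k - y : ℝ) : ℂ) + ((z₂*S/k : ℝ) : ℂ) * Complex.I := by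
    push_cast; field_simp; ring
  rw [hX, norm_div, norm_neg, Complex.norm_exp]
  have hre : (-Complex.I * (kt:ℂ) * (((x + z₁*S/k - y : ℝ) : ℂ)
      + ((z₂*S/k : ℝ) : ℂ) * Complex.I)).re = kt * (z₂*S/k) := by
    simp [Complex.mul_re, Complex.mul_im]
  rw [hre]
  have hden : ‖2 * Complex.I * (kt:ℂ)‖ = 2 * kt := by
    simp [map_mul, Complex.norm_I, Complex.norm_real, abs_of_pos hkt]
  rw [hden]
  ring_nf

/-- Theorem 3.1, case 1 (real `k̃ = k/√(1−c²k²) > 0`), bound for the solution `u^e` with the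
exponential kernel: for `|x| > l`,
`|u^e(x̃)| ≤ (√l/(√2 k̃ (1−c²k²)²)) e^{−(k̃/k) z₂ η(x)} ‖f‖_{L²(Ω)}`. -/
theorem pml_decay_exponential_kernel_real_wavenumber (l k c : ℝ) (hl : 0 < l) (hk : 0 < k)
    (hc : 0 < c) (hck : c * k < 1)
    (ktilde : ℝ) (hkt : ktilde = k / Real.sqrt (1 - c ^ 2 * k ^ 2))
    (f : ℝ → ℂ) (hf : MemLp f 2 volume)
    (hsupp : ∀ x : ℝ, x ∉ Set.Icc (-l) l → f x = 0)
    (σ : ℝ → ℝ) (hσint : LocallyIntegrable σ) (hσnn : ∀ t : ℝ, 0 ≤ σ t)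
    (hσ0 : ∀ t ∈ Set.Icc (-l) l, σ t = 0)
    (z₁ z₂ : ℝ) (hz₁ : 0 ≤ z₁) (hz₂ : 0 < z₂) :
    ∀ x : ℝ, l < |x| →
      ‖(((1 / (1 - c ^ 2 * k ^ 2) ^ 2 : ℝ) : ℂ) * ∫ y in (-l)..l,
          (if l < x then
            -Complex.exp (Complex.I * (ktilde : ℂ) *
              (((x : ℂ) + (((z₁ : ℂ) + (z₂ : ℂ) * Complex.I) / (k : ℂ)) *
                ((∫ t in (0:ℝ)..x, σ t : ℝ) : ℂ)) - (y : ℂ))) / (2 * Complex.I * (ktilde : ℂ))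
          else
            -Complex.exp (-Complex.I * (ktilde : ℂ) *
              (((x : ℂ) + (((z₁ : ℂ) + (z₂ : ℂ) * Complex.I) / (k : ℂ)) *
                ((∫ t in (0:ℝ)..x, σ t : ℝ) : ℂ)) - (y : ℂ))) / (2 * Complex.I * (ktilde : ℂ)))
          * f y)‖
        ≤ (Real.sqrt l / (Real.sqrt 2 * ktilde * (1 - c ^ 2 * k ^ 2) ^ 2)) *
            Real.exp (-(ktilde / k) * z₂ * |∫ t in (0:ℝ)..x, σ t|) *
            Real.sqrt (∫ y in (-l)..l, ‖f y‖ ^ 2) := by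
  intro x hx
  have hd : (0:ℝ) < 1 - c ^ 2 * k ^ 2 := by nlinarith [mul_pos hc hk]
  have hsq : 0 < Real.sqrt (1 - c ^ 2 * k ^ 2) := Real.sqrt_pos.mpr hd
  have hktpos : 0 < ktilde := hkt ▸ div_pos hk hsq
  set S := ∫ t in (0:ℝ)..x, σ t with hSdef
  set M := Real.exp (-(ktilde / k) * z₂ * |S|) / (2 * ktilde) with hM
  have hMpos : 0 < M := by positivity
  set A := (1 / (1 - c ^ 2 * k ^ 2) ^ 2 : ℝ) with hA
  have hApos : 0 < A := by positivity
  have hll : -l ≤ l := by linarith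
  -- the kernel has modulus M, in both cases
  have habs : ∀ y : ℝ,
      ‖(if l < x then
            -Complex.exp (Complex.I * (ktilde : ℂ) *
              (((x : ℂ) + (((z₁ : ℂ) + (z₂ : ℂ) * Complex.I) / (k : ℂ)) * ((S : ℝ) : ℂ))
                - (y : ℂ))) / (2 * Complex.I * (ktilde : ℂ))
          else
            -Complex.exp (-Complex.I * (ktilde : ℂ) *
              (((x : ℂ) + (((z₁ : ℂ) + (z₂ : ℂ) * Complex.I) / (k : ℂ)) * ((S : ℝ) : ℂ))
                - (y : ℂ))) / (2 * Complex.I * (ktilde : ℂ))) * f y‖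
        = M * ‖f y‖ := by
    intro y
    by_cases hxx : l < x
    · have hS0 : 0 ≤ S := by
        apply intervalIntegral.integral_nonneg (by linarith)
        exact fun u _ => hσnn u
      rw [if_pos hxx, norm_mul, pml_abs_kernel_pos ktilde k x y z₁ z₂ S hktpos hk]
      have : -(ktilde * z₂ * S / k) = -(ktilde / k) * z₂ * |S| := by
        rw [abs_of_nonneg hS0]; ring
      rw [this]
    · have hxneg : x < -l := by
        rcases abs_cases x with ⟨h1, _⟩ | ⟨h1, _⟩
        · exfalso; exact hxx (h1 ▸ hx)
        · linarith [h1 ▸ hx]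
      have hS0 : S ≤ 0 := by
        rw [hSdef, ← neg_nonneg, ← intervalIntegral.integral_symm]
        apply intervalIntegral.integral_nonneg (by linarith)
        exact fun u _ => hσnn u
      rw [if_neg hxx, norm_mul, pml_abs_kernel_neg ktilde k x y z₁ z₂ S hktpos hk]
      have : ktilde * z₂ * S / k = -(ktilde / k) * z₂ * |S| := by
        rw [abs_of_nonpos hS0]; ring
      rw [this]
  -- integrability facts
  haveI : IsFiniteMeasure (volume.restrict (Set.Ioc (-l) l)) := by
    constructor
    rw [Measure.restrict_apply_univ]
    simp [Real.volume_Ioc]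
  have hfmem : MemLp f 2 (volume.restrict (Set.Ioc (-l) l)) := hf.restrict _
  have hfi : IntegrableOn (fun y => ‖f y‖) (Set.Ioc (-l) l) := by
    exact (hfmem.integrable one_le_two).norm
  have hfi2 : IntegrableOn (fun y => ‖f y‖ ^ 2) (Set.Ioc (-l) l) := by
    exact hfmem.norm.integrable_sq
  -- Cauchy–Schwarz
  have hcs : ∫ y in Set.Ioc (-l) l, ‖f y‖ ≤
      Real.sqrt (2 * l) * Real.sqrt (∫ y in Set.Ioc (-l) l, ‖f y‖ ^ 2) := by
    have := pml_cs (-l) l (by linarith) (fun y => ‖f y‖) hfi hfi2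
    have h2l : l - (-l) = 2 * l := by ring
    rwa [h2l] at this
  -- bound the integral
  have hnorm : ‖∫ y in (-l)..l,
      (if l < x then
            -Complex.exp (Complex.I * (ktilde : ℂ) *
              (((x : ℂ) + (((z₁ : ℂ) + (z₂ : ℂ) * Complex.I) / (k : ℂ)) * ((S : ℝ) : ℂ))
                - (y : ℂ))) / (2 * Complex.I * (ktilde : ℂ))
          else
            -Complex.exp (-Complex.I * (ktilde : ℂ) *
              (((x : ℂ) + (((z₁ : ℂ) + (z₂ : ℂ) * Complex.I) / (k : ℂ)) * ((S : ℝ) : ℂ))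
                - (y : ℂ))) / (2 * Complex.I * (ktilde : ℂ))) * f y‖
      ≤ M * ∫ y in Set.Ioc (-l) l, ‖f y‖ := by
    refine (intervalIntegral.norm_integral_le_integral_norm hll).trans ?_
    rw [intervalIntegral.integral_of_le hll]
    have : ∀ y : ℝ, ‖(if l < x then
            -Complex.exp (Complex.I * (ktilde : ℂ) *
              (((x : ℂ) + (((z₁ : ℂ) + (z₂ : ℂ) * Complex.I) / (k : ℂ)) * ((S : ℝ) : ℂ))
                - (y : ℂ))) / (2 * Complex.I * (ktilde : ℂ))
          else
            -Complex.exp (-Complex.I * (ktilde : ℂ) *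
              (((x : ℂ) + (((z₁ : ℂ) + (z₂ : ℂ) * Complex.I) / (k : ℂ)) * ((S : ℝ) : ℂ))
                - (y : ℂ))) / (2 * Complex.I * (ktilde : ℂ))) * f y‖
        = M * ‖f y‖ := by
      intro y; exact habs y
    rw [integral_congr_ae (Filter.Eventually.of_forall fun y => this y), integral_const_mul]
  -- assemble
  rw [norm_mul, Complex.norm_real, Real.norm_eq_abs, abs_of_pos hApos]
  calc A * ‖_‖ ≤ A * (M * ∫ y in Set.Ioc (-l) l, ‖f y‖) := by
        exact mul_le_mul_of_nonneg_left hnorm hApos.le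
    _ ≤ A * (M * (Real.sqrt (2 * l) *
          Real.sqrt (∫ y in Set.Ioc (-l) l, ‖f y‖ ^ 2))) := by
        refine mul_le_mul_of_nonneg_left (mul_le_mul_of_nonneg_left hcs hMpos.le) hApos.le
    _ = (Real.sqrt l / (Real.sqrt 2 * ktilde * (1 - c ^ 2 * k ^ 2) ^ 2)) *
            Real.exp (-(ktilde / k) * z₂ * |S|) *
            Real.sqrt (∫ y in (-l)..l, ‖f y‖ ^ 2) := by
        rw [intervalIntegral.integral_of_le hll,
          Real.sqrt_mul (by norm_num : (0:ℝ) ≤ 2) l]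
        have hs2 : Real.sqrt 2 ^ 2 = 2 := Real.sq_sqrt (by norm_num)
        have hs2pos : 0 < Real.sqrt 2 := Real.sqrt_pos.mpr (by norm_num)
        have hrw : Real.sqrt l / (Real.sqrt 2 * ktilde * (1 - c ^ 2 * k ^ 2) ^ 2)
            = Real.sqrt 2 * Real.sqrt l / (2 * ktilde * (1 - c ^ 2 * k ^ 2) ^ 2) := by
          rw [div_eq_div_iff (by positivity) (by positivity)]
          linear_combination (-(Real.sqrt l * ktilde * (1 - c ^ 2 * k ^ 2) ^ 2)) * hs2
        rw [hrw, hA, hM]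
        field_simp
end

section
/- Let l > 0, k > 0, c > 0 with c·k > 1, and k̃ = i·k/√(c²k² − 1) (so Im(k̃) > 0). Let f ∈ L²(ℝ) with support contained in Ω = [−l, l]. Let σ: ℝ → ℝ be nonnegative with σ = 0 on [−l, l], let η(x) = |∫₀ˣ σ(t) dt|, and let z = z₁ + i z₂ with z₁ ≥ 0, z₂ > 0. Define x̃ = x + (z/k) ∫₀ˣ σ(t) dt, and define for |x| > l the PML-continued solution u^e(x̃) = (1/(1 − c²k²)²) ∫_{−l}^{l} G_{x̃}(y) f(y) dy, where G_{x̃}(y) = − e^{i k̃ (x̃ − y)}/(2 i k̃) when x > l and G_{x̃}(y) = − e^{−i k̃ (x̃ − y)}/(2 i k̃) when x < −l. Let λ ∈ (0,1). If z₁/z₂ ≥ −(1/(1−λ)) · Re(k̃)/Im(k̃), then for all |x| > l, |u^e(x̃)| ≤ (√l / (√2 · |k̃| · (1 − c²k²)²)) · e^{−λ Im(k̃) (|x + (z₁/k) η(x)| − l)} · ‖f‖_{L²(Ω)}. -/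
open MeasureTheory

set_option maxHeartbeats 1000000 in
/-- Theorem 3.1, case 2 for the exponential kernel with `c·k > 1` and
`k̃ = i k/√(c²k² − 1)` (so `Im k̃ > 0`): if `z₁/z₂ ≥ −(1/(1−λ)) Re(k̃)/Im(k̃)` then for
`|x| > l`, `|u^e(x̃)| ≤ (√l/(√2 |k̃| (1−c²k²)²)) e^{−λ Im(k̃)(|x+(z₁/k)η(x)|−l)} ‖f‖_{L²(Ω)}`. -/
theorem pml_decay_exponential_kernel_complex_wavenumber (l k c : ℝ) (hl : 0 < l) (hk : 0 < k)
    (hc : 0 < c) (hck : 1 < c * k)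
    (ktilde : ℂ)
    (hkt : ktilde = Complex.I * (k : ℂ) / ((Real.sqrt (c ^ 2 * k ^ 2 - 1) : ℝ) : ℂ))
    (f : ℝ → ℂ) (hf : MemLp f 2 volume)
    (hsupp : ∀ x : ℝ, x ∉ Set.Icc (-l) l → f x = 0)
    (σ : ℝ → ℝ) (hσint : LocallyIntegrable σ) (hσnn : ∀ t : ℝ, 0 ≤ σ t)
    (hσ0 : ∀ t ∈ Set.Icc (-l) l, σ t = 0)
    (z₁ z₂ : ℝ) (hz₁ : 0 ≤ z₁) (hz₂ : 0 < z₂)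
    (lam : ℝ) (hlam : lam ∈ Set.Ioo (0:ℝ) 1)
    (hratio : z₁ / z₂ ≥ -(1 / (1 - lam)) * (ktilde.re / ktilde.im)) :
    ∀ x : ℝ, l < |x| →
      ‖(((1 / (1 - c ^ 2 * k ^ 2) ^ 2 : ℝ) : ℂ) * ∫ y in (-l)..l,
          (if l < x then
            -Complex.exp (Complex.I * ktilde *
              (((x : ℂ) + (((z₁ : ℂ) + (z₂ : ℂ) * Complex.I) / (k : ℂ)) *
                ((∫ t in (0:ℝ)..x, σ t : ℝ) : ℂ)) - (y : ℂ))) / (2 * Complex.I * ktilde)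
          else
            -Complex.exp (-Complex.I * ktilde *
              (((x : ℂ) + (((z₁ : ℂ) + (z₂ : ℂ) * Complex.I) / (k : ℂ)) *
                ((∫ t in (0:ℝ)..x, σ t : ℝ) : ℂ)) - (y : ℂ))) / (2 * Complex.I * ktilde))
          * f y)‖
        ≤ (Real.sqrt l / (Real.sqrt 2 * ‖ktilde‖ * (1 - c ^ 2 * k ^ 2) ^ 2)) *
            Real.exp (-lam * ktilde.im *
              (abs (x + z₁ / k * |∫ t in (0:ℝ)..x, σ t|) - l)) *
            Real.sqrt (∫ y in (-l)..l, ‖f y‖ ^ 2) := by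
  obtain ⟨hlam0, hlam1⟩ := hlam
  intro x hx
  have hll : (-l : ℝ) ≤ l := by linarith
  have hck2 : 1 < c ^ 2 * k ^ 2 := by nlinarith
  have hs0 : 0 < Real.sqrt (c ^ 2 * k ^ 2 - 1) := Real.sqrt_pos.mpr (by linarith)
  set s : ℝ := Real.sqrt (c ^ 2 * k ^ 2 - 1) with hs
  set β : ℝ := k / s with hβ
  have hβ0 : 0 < β := div_pos hk hs0
  have hktI : ktilde = ((β : ℝ) : ℂ) * Complex.I := by rw [hkt, hβ]; push_cast; ring
  have habskt : ‖ktilde‖ = β := by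
    rw [hktI, norm_mul, Complex.norm_I, Complex.norm_real, Real.norm_eq_abs, abs_of_pos hβ0, mul_one]
  have hktim : ktilde.im = β := by rw [hktI]; simp
  have habs2 : ‖2 * Complex.I * ktilde‖ = 2 * β := by
    rw [hktI, norm_mul, norm_mul, Complex.norm_two, Complex.norm_I, norm_mul, Complex.norm_I,
      Complex.norm_real, Real.norm_eq_abs, abs_of_pos hβ0]; ring
  have hIk : Complex.I * ktilde = ((-β : ℝ) : ℂ) := by
    rw [hktI]; push_cast; linear_combination ((β : ℝ) : ℂ) * Complex.I_sq
  have hmIk : -Complex.I * ktilde = ((β : ℝ) : ℂ) := by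
    rw [hktI]; linear_combination (-((β : ℝ) : ℂ)) * Complex.I_sq
  set D : ℝ := (1 - c ^ 2 * k ^ 2) ^ 2 with hD
  have hD0 : 0 < D := by nlinarith
  have hc₀ : (0:ℝ) < 1 / D := one_div_pos.mpr hD0
  rw [habskt, hktim]
  set η₀ : ℝ := ∫ t in (0:ℝ)..x, σ t with hη₀
  set Q : ℝ := ∫ y in (-l)..l, ‖f y‖ ^ 2 with hQ
  set A : ℝ := |x| + z₁ / k * |η₀| with hA
  set B : ℝ := abs (x + z₁ / k * abs η₀) with hB
  have ht0 : 0 ≤ z₁ / k * |η₀| := mul_nonneg (div_nonneg hz₁ hk.le) (abs_nonneg _)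
  have hBA : B ≤ A := (abs_add_le _ _).trans (by rw [abs_of_nonneg ht0])
  have hlA : l ≤ A := le_trans hx.le (le_add_of_nonneg_right ht0)
  set M : ℝ := Real.exp (-(β * (A - l))) / (2 * β) with hM
  have hM0 : 0 ≤ M := by rw [hM]; positivity
  have h2β : (0:ℝ) < 2 * β := by linarith
  -- modulus of the Green's function factors
  have habsG1 : ∀ W : ℂ, ‖-Complex.exp (Complex.I * ktilde * W) /
      (2 * Complex.I * ktilde)‖ = Real.exp (-β * W.re) / (2 * β) := by
    intro W
    have hW : Complex.I * ktilde * W = ((-β : ℝ) : ℂ) * W := by rw [hIk]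
    rw [norm_div, norm_neg, habs2, hW, Complex.norm_exp, Complex.re_ofReal_mul]
  have habsG2 : ∀ W : ℂ, ‖-Complex.exp (-Complex.I * ktilde * W) /
      (2 * Complex.I * ktilde)‖ = Real.exp (β * W.re) / (2 * β) := by
    intro W
    have hW : -Complex.I * ktilde * W = ((β : ℝ) : ℂ) * W := by rw [hmIk]
    rw [norm_div, norm_neg, habs2, hW, Complex.norm_exp, Complex.re_ofReal_mul]
  -- real part of the stretched coordinate difference
  have hWre : ∀ y : ℝ, (((x : ℂ) + (((z₁ : ℂ) + (z₂ : ℂ) * Complex.I) / (k : ℂ)) *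
      ((η₀ : ℝ) : ℂ)) - (y : ℂ)).re = x + z₁ * η₀ / k - y := by
    intro y
    have hZ : (((z₁ : ℂ) + (z₂ : ℂ) * Complex.I) / (k : ℂ)) * ((η₀ : ℝ) : ℂ)
        = ((z₁ * η₀ / k : ℝ) : ℂ) + ((z₂ * η₀ / k : ℝ) : ℂ) * Complex.I := by
      push_cast; field_simp
    rw [hZ]; simp
  -- integrability facts
  haveI : Fact ((volume : Measure ℝ) (Set.Ioc (-l) l) < ⊤) := ⟨measure_Ioc_lt_top⟩
  have hfi : IntervalIntegrable f volume (-l) l := by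
    rw [intervalIntegrable_iff_integrableOn_Ioc_of_le hll]
    exact (hf.restrict _).integrable (by norm_num)
  have hgint : IntervalIntegrable (fun y => M * ‖f y‖) volume (-l) l := by
    simpa using (hfi.norm.const_mul M)
  have habsg : |∫ y in (-l)..l, M * ‖f y‖| = ∫ y in (-l)..l, M * ‖f y‖ :=
    abs_of_nonneg (intervalIntegral.integral_nonneg hll
      (fun u _ => mul_nonneg hM0 (norm_nonneg _)))
  -- Cauchy-Schwarz
  have hCS : ∫ y in (-l)..l, ‖f y‖ ≤ Real.sqrt Q * Real.sqrt (2 * l) := by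
    rw [hQ, intervalIntegral.integral_of_le hll, intervalIntegral.integral_of_le hll]
    set μr := (volume : Measure ℝ).restrict (Set.Ioc (-l) l) with hμr
    have hpq : Real.HolderConjugate 2 2 := Real.HolderConjugate.two_two
    have hf2 : MemLp (fun y => ‖f y‖) (ENNReal.ofReal 2) μr := by
      have h := (hf.norm).restrict (Set.Ioc (-l) l)
      simpa [ENNReal.ofReal_ofNat] using h
    have hone : MemLp (fun _ : ℝ => (1:ℝ)) (ENNReal.ofReal 2) μr := by
      simpa [ENNReal.ofReal_ofNat] using memLp_const (μ := μr) (1:ℝ)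
    have H := integral_mul_le_Lp_mul_Lq_of_nonneg hpq
      (Filter.Eventually.of_forall fun y => norm_nonneg _)
      (Filter.Eventually.of_forall fun _ => zero_le_one) hf2 hone
    simp only [mul_one, Real.one_rpow] at H
    have h1 : ∫ _ in Set.Ioc (-l) l, (1:ℝ) = 2 * l := by
      rw [integral_const, measureReal_def, Measure.restrict_apply_univ, Real.volume_Ioc, smul_eq_mul, mul_one,
        ENNReal.toReal_ofReal (by linarith)]
      ring
    have hrpow : ∀ a : ℝ, a ^ (2:ℝ) = a ^ 2 := fun a => by
      rw [show (2:ℝ) = ((2:ℕ):ℝ) by norm_num, Real.rpow_natCast]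
    rw [h1] at H
    refine H.trans_eq ?_
    rw [Real.sqrt_eq_rpow, Real.sqrt_eq_rpow]
    simp only [hrpow]
  -- exponential comparison
  have hexp : Real.exp (-(β * (A - l))) ≤ Real.exp (-lam * β * (B - l)) := by
    refine Real.exp_le_exp.mpr ?_
    nlinarith [mul_le_mul_of_nonneg_left hBA (mul_nonneg hlam0.le hβ0.le),
      mul_nonneg (mul_nonneg (by linarith : (0:ℝ) ≤ 1 - lam) hβ0.le)
        (by linarith : (0:ℝ) ≤ A - l)]
  -- main estimate
  rw [norm_mul, Complex.norm_real, Real.norm_eq_abs, abs_of_pos hc₀]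
  refine le_trans (mul_le_mul_of_nonneg_left
    ((intervalIntegral.norm_integral_le_of_norm_le hll ?_ hgint)) hc₀.le) ?_
  · -- pointwise bound
    refine Filter.Eventually.of_forall (fun y hy => ?_)
    by_cases hxl : l < x
    · rw [if_pos hxl, norm_mul, habsG1, hWre y]
      have hxpos : 0 < x := lt_trans hl hxl
      have hη₀nn : 0 ≤ η₀ := by
        rw [hη₀]; exact intervalIntegral.integral_nonneg hxpos.le (fun u _ => hσnn u)
      have hAeq : A = x + z₁ * η₀ / k := by
        rw [hA, abs_of_pos hxpos, abs_of_nonneg hη₀nn]; ring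
      refine mul_le_mul_of_nonneg_right ?_ (norm_nonneg _)
      rw [hM]
      refine (div_le_div_iff_of_pos_right h2β).mpr (Real.exp_le_exp.mpr ?_)
      have hβA : β * A = β * (x + z₁ * η₀ / k) := by rw [hAeq]
      nlinarith [hβA, mul_le_mul_of_nonneg_left hy.2 hβ0.le]
    · have hxle : x ≤ l := not_lt.mp hxl
      have hxneg : x < -l := by
        rcases abs_cases x with ⟨h1, h2⟩ | ⟨h1, h2⟩
        · linarith [hx, h1.symm ▸ hx]
        · linarith [hx, h1 ▸ hx]
      have hη₀np : η₀ ≤ 0 := by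
        rw [hη₀, intervalIntegral.integral_symm]
        exact neg_nonpos_of_nonneg
          (intervalIntegral.integral_nonneg (by linarith) (fun u _ => hσnn u))
      have hAeq : A = -(x + z₁ * η₀ / k) := by
        rw [hA, abs_of_neg (show x < 0 by linarith), abs_of_nonpos hη₀np]; ring
      rw [if_neg hxl, norm_mul, habsG2, hWre y]
      refine mul_le_mul_of_nonneg_right ?_ (norm_nonneg _)
      rw [hM]
      refine (div_le_div_iff_of_pos_right h2β).mpr (Real.exp_le_exp.mpr ?_)
      have hβA : β * A = -(β * (x + z₁ * η₀ / k)) := by rw [hAeq]; ring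
      nlinarith [hβA, mul_le_mul_of_nonneg_left hy.1.le hβ0.le]
  · -- conclusion
    rw [intervalIntegral.integral_const_mul]
    have h2 : Real.sqrt 2 * Real.sqrt 2 = 2 := Real.mul_self_sqrt (by norm_num)
    calc 1 / D * (M * ∫ y in (-l)..l, ‖f y‖)
        ≤ 1 / D * (M * (Real.sqrt Q * Real.sqrt (2 * l))) :=
          mul_le_mul_of_nonneg_left (mul_le_mul_of_nonneg_left hCS hM0) hc₀.le
      _ = Real.sqrt 2 * Real.sqrt l * Real.sqrt Q / (2 * β * D) *
            Real.exp (-(β * (A - l))) := by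
          rw [hM, Real.sqrt_mul (by norm_num : (0:ℝ) ≤ 2) l]
          field_simp
      _ ≤ Real.sqrt 2 * Real.sqrt l * Real.sqrt Q / (2 * β * D) *
            Real.exp (-lam * β * (B - l)) :=
          mul_le_mul_of_nonneg_left hexp
            (div_nonneg (by positivity) (by positivity))
      _ = Real.sqrt l / (Real.sqrt 2 * β * D) * Real.exp (-lam * β * (B - l)) *
            Real.sqrt Q := by
          generalize Real.exp (-lam * β * (B - l)) = e
          field_simp
          linear_combination (e * Real.sqrt Q) * h2
end
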